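/- Let x = (x_1, ..., x_n) with 0 < x_1 < x_2 < ... < x_n, and let μ = (μ_1, ..., μ_n) be integers with 0 ≤ μ_1 < μ_2 < ... < μ_n. Then the generalized Vandermonde determinant GVD(x; μ), the n×n determinant with (i,j) entry x_j^{μ_i}, is strictly positive. -/

import Mathlib

open Polynomial Finset

/-- Rolle's theorem for a finite set of roots of a polynomial. -/
lemma gv_rolle_finset (p : ℝ[X]) (s : Finset ℝ) (h : ∀ t ∈ s, p.eval t = 0) :
    ∃ s' : Finset ℝ, s.card ≤ s'.card + 1 ∧ ∀ t ∈ s',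
      p.derivative.eval t = 0 ∧ (∃ u ∈ s, u < t) ∧ ∃ v ∈ s, t < v := by
  induction s using Finset.strongInduction with
  | _ s ih =>
    by_cases hcard : s.card ≤ 1
    · exact ⟨∅, by simpa using hcard, by simp⟩
    push_neg at hcard
    have hne : s.Nonempty := Finset.card_pos.mp (by omega)
    set b := s.max' hne with hbdef
    have hb : b ∈ s := s.max'_mem hne
    set s₀ := s.erase b with hs₀def
    have hcard₀ : s₀.card = s.card - 1 := Finset.card_erase_of_mem hb
    have hs₀ne : s₀.Nonempty := Finset.card_pos.mp (by omega)
    set a := s₀.max' hs₀ne with hadef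
    have ha : a ∈ s₀ := s₀.max'_mem hs₀ne
    have hab : a < b :=
      lt_of_le_of_ne (s.le_max' a (Finset.mem_of_mem_erase ha)) (Finset.ne_of_mem_erase ha)
    obtain ⟨c, hc, hc0⟩ := exists_deriv_eq_zero (f := fun y => p.eval y) hab (p.continuous.continuousOn)
      (by beta_reduce; rw [h a (Finset.mem_of_mem_erase ha), h b hb])
    rw [Polynomial.deriv] at hc0
    obtain ⟨s', hcard', hmem'⟩ := ih s₀ (Finset.erase_ssubset hb)
      (fun t ht => h t (Finset.mem_of_mem_erase ht))
    have hcnot : c ∉ s' := by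
      intro hcs
      obtain ⟨-, -, v, hv, hv'⟩ := hmem' c hcs
      exact absurd ((hv'.trans_le (s₀.le_max' v hv)).trans hc.1) (lt_irrefl _)
    refine ⟨insert c s', ?_, ?_⟩
    · rw [Finset.card_insert_of_notMem hcnot]; omega
    · intro t ht
      rcases Finset.mem_insert.mp ht with rfl | ht'
      · exact ⟨hc0, ⟨a, Finset.mem_of_mem_erase ha, hc.1⟩, ⟨b, hb, hc.2⟩⟩
      · obtain ⟨h1, ⟨u, hu, hu'⟩, v, hv, hv'⟩ := hmem' t ht'
        exact ⟨h1, ⟨u, Finset.mem_of_mem_erase hu, hu'⟩,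
          v, Finset.mem_of_mem_erase hv, hv'⟩

lemma gv_deriv_support (p : ℝ[X]) (h0 : p.coeff 0 ≠ 0) :
    p.derivative.support.card + 1 ≤ p.support.card := by
  have h0s : (0 : ℕ) ∈ p.support := Polynomial.mem_support_iff.mpr h0
  have hle : p.derivative.support.card ≤ (p.support.erase 0).card := by
    apply Finset.card_le_card_of_injOn (fun i => i + 1)
    · intro i hi
      rw [Finset.mem_coe, Polynomial.mem_support_iff, Polynomial.coeff_derivative] at hi
      rw [Finset.mem_coe, Finset.mem_erase, Polynomial.mem_support_iff]
      exact ⟨Nat.succ_ne_zero i, left_ne_zero_of_mul hi⟩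
    · exact fun a _ b _ hab => by simpa using hab
  rw [Finset.card_erase_of_mem h0s] at hle
  have : 0 < p.support.card := Finset.card_pos.mpr ⟨0, h0s⟩
  omega

/-- A nonzero real polynomial has fewer than `p.support.card` distinct positive roots. -/
lemma gv_key : ∀ N (p : ℝ[X]), p.natDegree ≤ N → p ≠ 0 →
    ∀ s : Finset ℝ, (∀ t ∈ s, 0 < t) → (∀ t ∈ s, p.eval t = 0) → s.card < p.support.card := by
  intro N
  induction N with
  | zero =>
    intro p hdeg hp s hpos hroot
    have hc : p = C (p.coeff 0) := Polynomial.eq_C_of_natDegree_eq_zero (Nat.le_zero.mp hdeg)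
    have h0 : p.coeff 0 ≠ 0 := fun h => hp (by rw [hc, h, map_zero])
    have hs : s = ∅ := by
      rw [Finset.eq_empty_iff_forall_notMem]
      intro t ht
      have := hroot t ht
      rw [hc, Polynomial.eval_C] at this
      exact h0 this
    rw [hs]
    exact Finset.card_pos.mpr (Polynomial.support_nonempty.mpr hp)
  | succ N ih =>
    intro p hdeg hp s hpos hroot
    by_cases h0 : p.coeff 0 = 0
    · -- p = divX p * X
      have hpX : p = p.divX * X := by
        conv_lhs => rw [← p.divX_mul_X_add]
        rw [h0, map_zero, add_zero]
      have hd : p.divX ≠ 0 := fun h => hp (by rw [hpX, h, zero_mul])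
      have hnd : p.natDegree ≠ 0 := by
        intro h
        exact hp (by rw [Polynomial.eq_C_of_natDegree_eq_zero h, h0, map_zero])
      have hdegd : p.divX.natDegree ≤ N := by
        rw [Polynomial.natDegree_divX_eq_natDegree_tsub_one]; omega
      have hsupp : p.support = p.divX.support.map ⟨Nat.succ, Nat.succ_injective⟩ := by
        ext k
        cases k with
        | zero => simp [Polynomial.mem_support_iff, h0]
        | succ m =>
          simp [Polynomial.mem_support_iff, ← Polynomial.coeff_divX, Nat.succ_eq_add_one]
      have hroot' : ∀ t ∈ s, p.divX.eval t = 0 := by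
        intro t ht
        have := hroot t ht
        rw [hpX] at this
        simp only [Polynomial.eval_mul, Polynomial.eval_X] at this
        rcases mul_eq_zero.mp this with h | h
        · exact h
        · exact absurd h (ne_of_gt (hpos t ht))
      have := ih p.divX hdegd hd s hpos hroot'
      rw [hsupp, Finset.card_map]
      exact this
    · rcases s.eq_empty_or_nonempty with rfl | hsne
      · exact Finset.card_pos.mpr (Polynomial.support_nonempty.mpr hp)
      have hd' : p.derivative ≠ 0 := by
        intro h
        have hdz : p.natDegree = 0 := Polynomial.natDegree_eq_zero_of_derivative_eq_zero h
        obtain ⟨t, ht⟩ := hsne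
        have := hroot t ht
        rw [Polynomial.eq_C_of_natDegree_eq_zero hdz, Polynomial.eval_C] at this
        exact h0 this
      obtain ⟨s', hcard', hmem'⟩ := gv_rolle_finset p s hroot
      have hpos' : ∀ t ∈ s', 0 < t := by
        intro t ht
        obtain ⟨-, ⟨u, hu, hu'⟩, -⟩ := hmem' t ht
        exact (hpos u hu).trans hu'
      have hroot'' : ∀ t ∈ s', p.derivative.eval t = 0 := fun t ht => (hmem' t ht).1
      have hdegd : p.derivative.natDegree ≤ N := by
        have := p.natDegree_derivative_le
        omega
      have h1 := ih p.derivative hdegd hd' s' hpos' hroot''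
      have h2 := gv_deriv_support p h0
      omega

/-- The generalized Vandermonde determinant `det (x_j ^ μ_i)` is strictly
positive for `0 < x_1 < ⋯ < x_n` and integer exponents `0 ≤ μ_1 < ⋯ < μ_n`. -/
theorem generalized_vandermonde_pos (n : ℕ) (x : Fin n → ℝ) (μ : Fin n → ℕ)
    (hxpos : ∀ j, 0 < x j) (hx : StrictMono x) (hμ : StrictMono μ) :
    0 < Matrix.det (Matrix.of fun i j : Fin n => x j ^ μ i) := by
  induction n with
  | zero => simp [Matrix.det_fin_zero]
  | succ n ih =>
    set last : Fin (n + 1) := Fin.last n with hlastdef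
    set p : ℝ[X] := Matrix.det (Matrix.of fun i j : Fin (n + 1) =>
      if j = last then (Polynomial.X : ℝ[X]) ^ μ i else Polynomial.C (x j ^ μ i)) with hpdef
    -- evaluation of p
    have heval : ∀ t : ℝ, p.eval t = Matrix.det (Matrix.of fun i j : Fin (n + 1) =>
        if j = last then t ^ μ i else x j ^ μ i) := by
      intro t
      rw [show p.eval t = (Polynomial.evalRingHom t) p from rfl, hpdef, RingHom.map_det]
      congr 1
      ext i j
      by_cases h : j = last <;> simp [h]
    -- the coefficients
    set c : Fin (n + 1) → ℝ := fun i => (-1 : ℝ) ^ ((i : ℕ) + (last : ℕ)) *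
      Matrix.det (Matrix.of fun i' j' : Fin n =>
        x (Fin.castSucc j') ^ μ (i.succAbove i')) with hcdef
    have hp : p = ∑ i : Fin (n + 1), Polynomial.C (c i) * Polynomial.X ^ μ i := by
      rw [hpdef, Matrix.det_succ_column _ last]
      refine Finset.sum_congr rfl fun i _ => ?_
      have hsub : (Matrix.of fun i j : Fin (n + 1) =>
          if j = last then (Polynomial.X : ℝ[X]) ^ μ i else Polynomial.C (x j ^ μ i)).submatrix
            i.succAbove last.succAbove =
          (Polynomial.C : ℝ →+* ℝ[X]).mapMatrix (Matrix.of fun i' j' : Fin n =>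
            x (Fin.castSucc j') ^ μ (i.succAbove i')) := by
        ext i' j'
        have h1 : last.succAbove j' = Fin.castSucc j' := by
          rw [hlastdef, Fin.succAbove_last]
        have h2 : Fin.castSucc j' ≠ last := (Fin.castSucc_lt_last j').ne
        simp [h1, h2]
      rw [hsub, ← RingHom.map_det]
      simp only [Matrix.of_apply, if_pos rfl, hcdef, map_mul, map_pow, map_neg, map_one,
        if_true, eq_self_iff_true]
      ring
    have hcoeff : ∀ k : Fin (n + 1), p.coeff (μ k) = c k := by
      intro k
      rw [hp, Polynomial.finset_sum_coeff]
      simp only [Polynomial.coeff_C_mul, Polynomial.coeff_X_pow, hμ.injective.eq_iff,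
        mul_ite, mul_one, mul_zero]
      rw [Finset.sum_ite_eq Finset.univ k c]
      simp
    -- positivity of leading coefficient from the induction hypothesis
    have hclast : 0 < c last := by
      have hmono : StrictMono (fun j : Fin n => x (Fin.castSucc j)) :=
        hx.comp Fin.strictMono_castSucc
      have hmono' : StrictMono (fun i : Fin n => μ (last.succAbove i)) := by
        have : last.succAbove = Fin.castSucc := Fin.succAbove_last
        rw [this]
        exact hμ.comp Fin.strictMono_castSucc
      have := ih (fun j => x (Fin.castSucc j)) (fun i => μ (last.succAbove i))
        (fun j => hxpos _) hmono hmono'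
      have heven : (-1 : ℝ) ^ ((last : ℕ) + (last : ℕ)) = 1 :=
        Even.neg_one_pow ⟨(last : ℕ), rfl⟩
      rw [hcdef]
      simp only [heven, one_mul]
      exact this
    have hp0 : p ≠ 0 := by
      intro h
      have h2 := hcoeff last
      rw [h] at h2
      simp only [Polynomial.coeff_zero] at h2
      exact absurd h2.symm (ne_of_gt hclast)
    -- support bound
    have hsupp : p.support ⊆ Finset.image μ Finset.univ := by
      intro k hk
      rw [Polynomial.mem_support_iff] at hk
      by_contra hnot
      apply hk
      rw [hp, Polynomial.finset_sum_coeff]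
      apply Finset.sum_eq_zero
      intro i _
      rw [Polynomial.coeff_C_mul, Polynomial.coeff_X_pow, if_neg, mul_zero]
      intro h
      exact hnot (Finset.mem_image.mpr ⟨i, Finset.mem_univ i, h.symm⟩)
    have hsuppcard : p.support.card ≤ n + 1 :=
      le_trans (Finset.card_le_card hsupp) (le_trans Finset.card_image_le (by simp))
    -- degree and leading coefficient
    have hndeg : p.natDegree = μ last := by
      apply le_antisymm
      · rw [hp]
        apply Polynomial.natDegree_sum_le_of_forall_le
        intro i _
        exact le_trans (Polynomial.natDegree_C_mul_X_pow_le _ _) (hμ.monotone (Fin.le_last i))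
      · exact Polynomial.le_natDegree_of_ne_zero (by rw [hcoeff]; exact ne_of_gt hclast)
    have hlead : 0 < p.leadingCoeff := by
      rw [Polynomial.leadingCoeff, hndeg, hcoeff]
      exact hclast
    -- the known roots
    have hroot : ∀ j : Fin n, p.eval (x (Fin.castSucc j)) = 0 := by
      intro j
      rw [heval]
      apply Matrix.det_zero_of_column_eq ((Fin.castSucc_lt_last j).ne : Fin.castSucc j ≠ last)
      intro k
      simp [(Fin.castSucc_lt_last j).ne, hlastdef]
    set s : Finset ℝ := Finset.image (fun j : Fin n => x (Fin.castSucc j)) Finset.univ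
      with hsdef
    have hscard : s.card = n := by
      have hinj : Function.Injective (fun j : Fin n => x (Fin.castSucc j)) :=
        fun a b h => Fin.castSucc_injective n (hx.injective h)
      rw [hsdef, Finset.card_image_of_injective _ hinj]
      simp
    have hsmem : ∀ t ∈ s, 0 < t ∧ p.eval t = 0 ∧ t < x last := by
      intro t ht
      obtain ⟨j, -, rfl⟩ := Finset.mem_image.mp ht
      exact ⟨hxpos _, hroot j, hx (Fin.castSucc_lt_last j)⟩
    -- no other positive roots
    have hnoroot : ∀ t : ℝ, 0 < t → t ∉ s → p.eval t ≠ 0 := by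
      intro t ht hts heq
      have hkey := gv_key p.natDegree p le_rfl hp0 (insert t s)
        (fun u hu => by
          rcases Finset.mem_insert.mp hu with rfl | hu'
          · exact ht
          · exact (hsmem u hu').1)
        (fun u hu => by
          rcases Finset.mem_insert.mp hu with rfl | hu'
          · exact heq
          · exact (hsmem u hu').2.1)
      rw [Finset.card_insert_of_notMem hts, hscard] at hkey
      omega
    -- conclude
    have hxlast : x last ∉ s := fun h => absurd (hsmem _ h).2.2 (lt_irrefl _)
    have hne0 : p.eval (x last) ≠ 0 := hnoroot (x last) (hxpos last) hxlast
    have hdet : p.eval (x last) = (Matrix.of fun i j : Fin (n+1) => x j ^ μ i).det := by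
      rw [heval]
      congr 1
      ext i j
      by_cases hj : j = last <;> simp [hj]
    by_contra hle
    push_neg at hle
    rw [← hdet] at hle
    have hlt : p.eval (x last) < 0 := lt_of_le_of_ne hle hne0
    -- p is not constant here: otherwise eval = leadingCoeff > 0
    have hdegpos : 0 < p.degree := by
      by_contra hdeg
      push_neg at hdeg
      have : p.natDegree = 0 :=
        Nat.le_zero.mp (Polynomial.natDegree_le_iff_degree_le.mpr (by exact_mod_cast hdeg))
      have hpc : p = Polynomial.C (p.coeff 0) := Polynomial.eq_C_of_natDegree_eq_zero this
      have : p.leadingCoeff = p.coeff 0 := by rw [Polynomial.leadingCoeff, this]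
      rw [hpc, Polynomial.eval_C] at hlt
      rw [this] at hlead
      linarith
    have htend := Polynomial.tendsto_atTop_of_leadingCoeff_nonneg p hdegpos hlead.le
    obtain ⟨t0, ht01, ht02⟩ :=
      ((htend.eventually_ge_atTop 1).and (Filter.eventually_gt_atTop (x last))).exists
    have hivt : (0 : ℝ) ∈ Set.Ioo (p.eval (x last)) (p.eval t0) := ⟨hlt, by linarith⟩
    obtain ⟨r, hr, hr0⟩ := intermediate_value_Ioo ht02.le (p.continuous.continuousOn) hivt
    have hrpos : 0 < r := (hxpos last).trans hr.1
    have hrs : r ∉ s := by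
      intro h
      exact absurd ((hsmem r h).2.2) (not_lt_of_gt hr.1)
    exact hnoroot r hrpos hrs hr0
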